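/- Let (Ω, 𝓕, ℙ) be a probability space, let X : Ω → ℝ be a random variable with ℙ(X ≠ 0) > 0, let U : ℝ → ℝ be nondecreasing with U(x) → ∞ as x → ∞, and let r₀ ∈ ℝ. Then the supremum, over all measurable functions θ : Ω → ℝ, of the expected utility E[U(r₀ + θ·X)] (each such expectation being well defined in (−∞, ∞] whenever the integrand is bounded below) equals +∞. Consequently, if this supremum is finite then X = 0 almost surely. -/

import Mathlib

open MeasureTheory Filter in
/-- If `ℙ(X ≠ 0) > 0`, then the supremum over measurable positions `θ` of the expected
utility `E[U(r₀ + θ·X)]` is `+∞`: for every level `M` there is a measurable `θ` whose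
expected utility is well defined (indeed the utility is integrable) and exceeds `M`.
Consequently, if this supremum is finite then `X = 0` almost surely. -/
theorem stmt_3 {Ω : Type*} [MeasurableSpace Ω] (ℙ : Measure Ω) [IsProbabilityMeasure ℙ]
    (X : Ω → ℝ) (hXm : Measurable X) (hXne : 0 < ℙ {ω | X ω ≠ 0})
    (U : ℝ → ℝ) (hUmono : Monotone U) (hUtop : Tendsto U atTop atTop) (r₀ : ℝ) :
    ∀ M : ℝ, ∃ θ : Ω → ℝ, Measurable θ ∧
      Integrable (fun ω => U (r₀ + θ ω * X ω)) ℙ ∧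
      M ≤ ∫ ω, U (r₀ + θ ω * X ω) ∂ℙ := by
  intro M
  set A : Set Ω := {ω | X ω ≠ 0} with hAdef
  have hA : MeasurableSet A := (hXm (measurableSet_singleton 0)).compl
  have hp : 0 < (ℙ A).toReal := ENNReal.toReal_pos hXne.ne' (measure_ne_top _ _)
  set p := (ℙ A).toReal with hpdef
  have hp1 : p ≤ 1 := by
    rw [hpdef]
    exact ENNReal.toReal_le_of_le_ofReal zero_le_one (by simp [prob_le_one])
  obtain ⟨x, hx⟩ := (hUtop.eventually_ge_atTop ((M + 2 * |U r₀|) / p)).exists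
  set c := max (x - r₀) 0 with hcdef
  have hc0 : (0:ℝ) ≤ c := le_max_right _ _
  have hUc1 : U r₀ ≤ U (r₀ + c) := hUmono (by linarith)
  have hUc2 : (M + 2 * |U r₀|) / p ≤ U (r₀ + c) := by
    refine le_trans hx (hUmono ?_)
    have := le_max_left (x - r₀) (0:ℝ)
    linarith
  refine ⟨fun ω => c * (X ω)⁻¹, measurable_const.mul hXm.inv, ?_, ?_⟩
  all_goals
    have key : (fun ω => U (r₀ + (c * (X ω)⁻¹) * X ω))
        = fun ω => A.indicator (fun _ => U (r₀ + c) - U r₀) ω + U r₀ := by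
      funext ω
      by_cases h : X ω = 0
      · have hωA : ω ∉ A := by simp [hAdef, h]
        simp [h, Set.indicator_of_notMem hωA]
      · have hωA : ω ∈ A := by simpa [hAdef] using h
        have hmul : (c * (X ω)⁻¹) * X ω = c := by field_simp
        simp [hmul, Set.indicator_of_mem hωA]
  · rw [show (fun ω => U (r₀ + (fun ω => c * (X ω)⁻¹) ω * X ω))
        = fun ω => A.indicator (fun _ => U (r₀ + c) - U r₀) ω + U r₀ from key]
    exact ((integrable_const _).indicator hA).add (integrable_const _)
  · rw [show (fun ω => U (r₀ + (fun ω => c * (X ω)⁻¹) ω * X ω))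
        = fun ω => A.indicator (fun _ => U (r₀ + c) - U r₀) ω + U r₀ from key]
    rw [integral_add ((integrable_const _).indicator hA) (integrable_const _),
      integral_indicator_const _ hA, integral_const]
    simp only [smul_eq_mul, one_mul]
    rw [show ℙ.real Set.univ = (ℙ Set.univ).toReal from rfl, measure_univ, ENNReal.toReal_one, one_mul]
    rw [show ℙ.real A = p from rfl]
    have h1 : M + 2 * |U r₀| ≤ p * U (r₀ + c) := by
      rw [div_le_iff₀ hp] at hUc2
      linarith [hUc2]
    have h2 : p * U r₀ ≤ |U r₀| := by
      calc p * U r₀ ≤ p * |U r₀| := by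
            exact mul_le_mul_of_nonneg_left (le_abs_self _) hp.le
        _ ≤ 1 * |U r₀| := by
            exact mul_le_mul_of_nonneg_right hp1 (abs_nonneg _)
        _ = |U r₀| := one_mul _
    have h3 : -|U r₀| ≤ U r₀ := neg_abs_le _
    nlinarith [hp, hp1]
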